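/- Assume x̄ ≠ 0 and ε̃ ≥ 0. If x ∈ ℝⁿ satisfies ⟨x̄,x⟩ = 0 and ‖x‖² = (‖x̄‖² + ε̃)/3, then ∇g(x) = 0 and x is a strict saddle point of g: x is neither a local minimizer nor a local maximizer of g. In fact the second derivative of t ↦ g(x + t·x̄) at t = 0 equals −2‖x̄‖⁴ < 0, while the second derivative of t ↦ g(x + t·x) at t = 0 equals 6‖x‖⁴ > 0. -/

import Mathlib

open scoped RealInnerProductSpace BigOperators

/-- The expectation `g` of the noisy phase-retrieval objective (up to an additive constant). -/
noncomputable def gObj (n : ℕ) (xbar : EuclideanSpace ℝ (Fin n)) (εt : ℝ)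
    (x : EuclideanSpace ℝ (Fin n)) : ℝ :=
  (3 / 4) * (‖x‖ ^ 4 + ‖xbar‖ ^ 4) - (1 / 2) * ‖xbar‖ ^ 2 * ‖x‖ ^ 2 - ⟪xbar, x⟫ ^ 2
    - (εt / 2) * (‖x‖ ^ 2 - ‖xbar‖ ^ 2)

/-- The gradient of `g`. -/
noncomputable def gGrad (n : ℕ) (xbar : EuclideanSpace ℝ (Fin n)) (εt : ℝ)
    (x : EuclideanSpace ℝ (Fin n)) : EuclideanSpace ℝ (Fin n) :=
  (3 * ‖x‖ ^ 2) • x - (2 * ⟪xbar, x⟫) • xbar - (‖xbar‖ ^ 2 + εt) • x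

lemma poly_second_deriv (a b c d e : ℝ) :
    deriv (deriv fun t : ℝ => a + b*t + c*t^2 + d*t^3 + e*t^4) 0 = 2*c := by
  have h1 : (deriv fun t : ℝ => a + b*t + c*t^2 + d*t^3 + e*t^4)
      = fun t : ℝ => b + 2*c*t + 3*d*t^2 + 4*e*t^3 := by
    funext t
    have : HasDerivAt (fun t : ℝ => a + b*t + c*t^2 + d*t^3 + e*t^4)
        (b + 2*c*t + 3*d*t^2 + 4*e*t^3) t := by
      have := ((((hasDerivAt_const t a).add ((hasDerivAt_id t).const_mul b)).add
        (((hasDerivAt_pow 2 t)).const_mul c)).add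
        (((hasDerivAt_pow 3 t)).const_mul d)).add
        (((hasDerivAt_pow 4 t)).const_mul e)
      refine this.congr_deriv ?_
      push_cast; ring
    exact this.deriv
  rw [h1]
  have : HasDerivAt (fun t : ℝ => b + 2*c*t + 3*d*t^2 + 4*e*t^3)
      (2*c) 0 := by
    have := (((hasDerivAt_const (0:ℝ) b).add ((hasDerivAt_id (0:ℝ)).const_mul (2*c))).add
      (((hasDerivAt_pow 2 (0:ℝ))).const_mul (3*d))).add
      (((hasDerivAt_pow 3 (0:ℝ))).const_mul (4*e))
    refine this.congr_deriv ?_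
    push_cast; ring
  rw [this.deriv]

/-- points orthogonal to `x̄` on the sphere of radius
`√((‖x̄‖² + ε̃)/3)` are strict saddle points of `g`. -/
theorem stmt10 (n : ℕ) (xbar : EuclideanSpace ℝ (Fin n)) (hxbar : xbar ≠ 0)
    (εt : ℝ) (hεt : 0 ≤ εt) (x : EuclideanSpace ℝ (Fin n))
    (horth : ⟪xbar, x⟫ = 0) (hsph : ‖x‖ ^ 2 = (‖xbar‖ ^ 2 + εt) / 3) :
    gGrad n xbar εt x = 0 ∧
    ¬ IsLocalMin (gObj n xbar εt) x ∧
    ¬ IsLocalMax (gObj n xbar εt) x ∧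
    deriv (deriv fun t : ℝ => gObj n xbar εt (x + t • xbar)) 0 = -2 * ‖xbar‖ ^ 4 ∧
    -2 * ‖xbar‖ ^ 4 < 0 ∧
    deriv (deriv fun t : ℝ => gObj n xbar εt (x + t • x)) 0 = 6 * ‖x‖ ^ 4 ∧
    0 < 6 * ‖x‖ ^ 4 := by
  have hB : 0 < ‖xbar‖ ^ 2 := pow_pos (norm_pos_iff.mpr hxbar) 2
  have hA3 : 3 * ‖x‖ ^ 2 = ‖xbar‖ ^ 2 + εt := by rw [hsph]; ring
  have hA : 0 < ‖x‖ ^ 2 := by nlinarith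
  have hnx : ∀ t : ℝ, ‖x + t • xbar‖ ^ 2 = ‖x‖ ^ 2 + t ^ 2 * ‖xbar‖ ^ 2 := by
    intro t
    rw [norm_add_sq_real, norm_smul, real_inner_smul_right, real_inner_comm, horth]
    simp [mul_pow, sq_abs]
  have hix : ∀ t : ℝ, ⟪xbar, x + t • xbar⟫ = t * ‖xbar‖ ^ 2 := by
    intro t
    rw [inner_add_right, real_inner_smul_right, horth, real_inner_self_eq_norm_sq]
    ring
  have hnx2 : ∀ t : ℝ, ‖x + t • x‖ ^ 2 = (1 + t) ^ 2 * ‖x‖ ^ 2 := by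
    intro t
    have h : x + t • x = (1 + t) • x := by module
    rw [h, norm_smul]
    simp [mul_pow, sq_abs]
  have hix2 : ∀ t : ℝ, ⟪xbar, x + t • x⟫ = 0 := by
    intro t
    rw [inner_add_right, real_inner_smul_right, horth]; ring
  have h4 : ∀ y : EuclideanSpace ℝ (Fin n), ‖y‖ ^ 4 = (‖y‖ ^ 2) ^ 2 := fun y => by ring
  have key1 : ∀ t : ℝ, gObj n xbar εt (x + t • xbar)
      = gObj n xbar εt x + 0 * t + (-(‖xbar‖ ^ 2 ^ 2)) * t ^ 2 + 0 * t ^ 3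
        + ((3/4) * ‖xbar‖ ^ 2 ^ 2) * t ^ 4 := by
    intro t
    simp only [gObj, h4, hnx t, hix t, horth]
    linear_combination (t ^ 2 * ‖xbar‖ ^ 2 / 2) * hA3
  have key2 : ∀ t : ℝ, gObj n xbar εt (x + t • x)
      = gObj n xbar εt x + 0 * t + (3 * ‖x‖ ^ 2 ^ 2) * t ^ 2 + (3 * ‖x‖ ^ 2 ^ 2) * t ^ 3
        + ((3/4) * ‖x‖ ^ 2 ^ 2) * t ^ 4 := by
    intro t
    simp only [gObj, h4, hnx2 t, hix2 t, horth]
    linear_combination (‖x‖ ^ 2 * (2 * t + t ^ 2) / 2) * hA3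
  refine ⟨?_, ?_, ?_, ?_, by nlinarith [mul_pos hB hB], ?_, by nlinarith [mul_pos hA hA]⟩
  · rw [gGrad, horth, hA3]
    simp
  · intro h
    have h0 : IsLocalMin ((gObj n xbar εt) ∘ fun t : ℝ => x + t • xbar) 0 := by
      apply IsLocalMin.comp_continuous
      · simpa using h
      · fun_prop
    obtain ⟨δ, hδ, hmin⟩ := Metric.eventually_nhds_iff.mp h0
    set t := min (δ / 2) (1 / 2) with ht
    have htpos : 0 < t := lt_min (by linarith) (by norm_num)
    have ht1 : t ≤ 1 / 2 := min_le_right _ _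
    have htδ : dist t 0 < δ := by
      rw [Real.dist_eq, sub_zero, abs_of_pos htpos]
      calc t ≤ δ / 2 := min_le_left _ _
        _ < δ := by linarith
    have hle := hmin htδ
    simp only [Function.comp_apply] at hle
    rw [key1 t, key1 0] at hle
    norm_num at hle
    have hC : 0 < ‖xbar‖ ^ 4 := pow_pos (norm_pos_iff.mpr hxbar) 4
    have ht2 : t ^ 2 ≤ 1 / 4 := by nlinarith
    nlinarith [mul_pos hC (mul_pos htpos htpos),
      mul_le_mul_of_nonneg_left ht2 (mul_pos hC (mul_pos htpos htpos)).le]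
  · intro h
    have h0 : IsLocalMax ((gObj n xbar εt) ∘ fun t : ℝ => x + t • x) 0 := by
      apply IsLocalMax.comp_continuous
      · simpa using h
      · fun_prop
    obtain ⟨δ, hδ, hmax⟩ := Metric.eventually_nhds_iff.mp h0
    set t := min (δ / 2) (1 / 2) with ht
    have htpos : 0 < t := lt_min (by linarith) (by norm_num)
    have htδ : dist t 0 < δ := by
      rw [Real.dist_eq, sub_zero, abs_of_pos htpos]
      calc t ≤ δ / 2 := min_le_left _ _
        _ < δ := by linarith
    have hle := hmax htδ
    simp only [Function.comp_apply] at hle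
    rw [key2 t, key2 0] at hle
    norm_num at hle
    have hD : 0 < ‖x‖ ^ 4 := by nlinarith [mul_pos hA hA]
    nlinarith [mul_pos hD (mul_pos htpos htpos),
      mul_pos (mul_pos hD (mul_pos htpos htpos)) htpos,
      mul_pos (mul_pos hD (mul_pos htpos htpos)) (mul_pos htpos htpos)]
  · rw [show (fun t : ℝ => gObj n xbar εt (x + t • xbar)) = fun t : ℝ =>
      gObj n xbar εt x + 0 * t + (-(‖xbar‖ ^ 2 ^ 2)) * t ^ 2 + 0 * t ^ 3
        + ((3/4) * ‖xbar‖ ^ 2 ^ 2) * t ^ 4 from funext key1, poly_second_deriv]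
    ring
  · rw [show (fun t : ℝ => gObj n xbar εt (x + t • x)) = fun t : ℝ =>
      gObj n xbar εt x + 0 * t + (3 * ‖x‖ ^ 2 ^ 2) * t ^ 2 + (3 * ‖x‖ ^ 2 ^ 2) * t ^ 3
        + ((3/4) * ‖x‖ ^ 2 ^ 2) * t ^ 4 from funext key2, poly_second_deriv]
    ring
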